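/- Boundary-shift mass bound: Let μ̃(θ) = π(θ) exp(n ℓ(θ)) 1_Θ(θ) be an unnormalized density on Θ ⊆ [0,∞)^d, let j be a coordinate, t > 0, and G ⊆ Θ a set closed under the shift θ ↦ θ − t e_j whenever θ_j ≥ t. Suppose log π_j is L_π-Lipschitz and ∂_j ℓ(θ − u e_j) ≤ −c/2 for all θ ∈ A_j := {θ ∈ G : θ_j ≥ t} and u ∈ [0, t]. Then μ(A_j) ≤ exp(−(c/2 − L_π/n)·nt)·μ(G), where μ is the normalized probability measure. -/

import Mathlib

open MeasureTheory Filter Topology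
set_option maxHeartbeats 1000000

/-- **Boundary-shift mass bound.** Let `μ̃(θ) = π(θ)exp(nℓ(θ))` on `Θ ⊆ [0,∞)^d` with
product prior `π(θ) = ∏ᵢ πᵢ(θᵢ)`, each `log πᵢ` being `L_π`-Lipschitz. If `G ⊆ Θ` is
closed under the shift `θ ↦ θ − u·eⱼ` (for `0 ≤ u ≤ θⱼ`), and
`∂ⱼℓ(θ − u·eⱼ) ≤ −c/2` for all `θ ∈ Aⱼ = {θ ∈ G : θⱼ ≥ t}` and `u ∈ [0,t]`, then
`μ(Aⱼ) ≤ exp(−(c/2 − L_π/n)·nt)·μ(G)` for the normalized measure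
`μ(A) = ∫_A μ̃ / ∫_Θ μ̃`. -/
theorem boundary_shift_mass_bound (d : ℕ) (n t c Lπ : ℝ)
    (hn : 0 < n) (ht : 0 < t) (hc : 0 < c) (hLπ : 0 ≤ Lπ)
    (Θ G : Set (EuclideanSpace ℝ (Fin d))) (hGΘ : G ⊆ Θ)
    (hΘpos : ∀ θ ∈ Θ, ∀ i, 0 ≤ θ i)
    (j : Fin d)
    (pri : Fin d → ℝ → ℝ) (hpri_pos : ∀ i x, 0 < pri i x)
    (hpri_lip : ∀ i x y, |Real.log (pri i x) - Real.log (pri i y)| ≤ Lπ * |x - y|)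
    (ℓ : EuclideanSpace ℝ (Fin d) → ℝ)
    (hshift : ∀ θ ∈ G, ∀ u : ℝ, 0 ≤ u → u ≤ θ j →
      θ - u • EuclideanSpace.single j 1 ∈ G)
    (hdiff : ∀ θ ∈ G, DifferentiableAt ℝ ℓ θ)
    (hgrad : ∀ θ ∈ G, t ≤ θ j → ∀ u ∈ Set.Icc (0 : ℝ) t,
      fderiv ℝ ℓ (θ - u • EuclideanSpace.single j 1) (EuclideanSpace.single j 1) ≤
        -(c / 2))
    (w : EuclideanSpace ℝ (Fin d) → ℝ)
    (hw : ∀ θ, w θ = (∏ i, pri i (θ i)) * Real.exp (n * ℓ θ))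
    (Z : ℝ) (hZ : Z = ∫ θ in Θ, w θ) (hZpos : 0 < Z) :
    (∫ θ in {θ ∈ G | t ≤ θ j}, w θ) / Z ≤
      Real.exp (-(c / 2 - Lπ / n) * (n * t)) * ((∫ θ in G, w θ) / Z) := by
  classical
  set v₁ : EuclideanSpace ℝ (Fin d) := EuclideanSpace.single j (1:ℝ) with hv₁
  set v : EuclideanSpace ℝ (Fin d) := t • v₁ with hv
  set A : Set (EuclideanSpace ℝ (Fin d)) := {θ ∈ G | t ≤ θ j} with hA
  set K : ℝ := Real.exp (-(c / 2 - Lπ / n) * (n * t)) with hK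
  have hKpos : 0 < K := Real.exp_pos _
  -- positivity of w
  have hwpos : ∀ θ, 0 < w θ := by
    intro θ
    rw [hw]
    exact mul_pos (Finset.prod_pos fun i _ => hpri_pos i (θ i)) (Real.exp_pos _)
  -- continuity of priors
  have hpri_cont : ∀ i, Continuous (pri i) := by
    intro i
    have hlip : Continuous fun x => Real.log (pri i x) := by
      apply (LipschitzWith.of_dist_le_mul (K := Real.toNNReal Lπ) ?_).continuous
      intro x y
      rw [Real.dist_eq, Real.dist_eq, Real.coe_toNNReal _ hLπ]
      exact hpri_lip i x y
    have : (fun x => Real.exp (Real.log (pri i x))) = pri i := by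
      funext x; exact Real.exp_log (hpri_pos i x)
    rw [← this]
    exact Real.continuous_exp.comp hlip
  -- continuity of w on G
  have hwG_cont : ∀ θ ∈ G, ContinuousAt w θ := by
    intro θ hθ
    have hwfun : w = fun θ => (∏ i, pri i (θ i)) * Real.exp (n * ℓ θ) := funext hw
    rw [hwfun]
    apply ContinuousAt.mul
    · exact (continuous_finset_prod Finset.univ fun i _ =>
        (hpri_cont i).comp ((continuous_apply i).comp (PiLp.continuous_ofLp 2 _))).continuousAt
    · exact (Real.continuous_exp.continuousAt).comp
        ((continuousAt_const.mul (hdiff θ hθ).continuousAt))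
  -- pointwise core bound on A
  have hcore : ∀ θ ∈ A, w θ ≤ K * w (θ - v) := by
    rintro θ ⟨hθG, hθt⟩
    have hmem : ∀ u ∈ Set.Icc (0:ℝ) t, θ - u • v₁ ∈ G := fun u hu =>
      hshift θ hθG u hu.1 (hu.2.trans hθt)
    -- MVT part
    have hℓle : ℓ θ ≤ ℓ (θ - v) - c / 2 * t := by
      set F : ℝ → ℝ := fun u => ℓ (θ - u • v₁) - c / 2 * u with hF
      have hder : ∀ u ∈ Set.Icc (0:ℝ) t,
          HasDerivAt F (fderiv ℝ ℓ (θ - u • v₁) (-v₁) - c / 2) u := by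
        intro u hu
        have hφ : HasDerivAt (fun u : ℝ => θ - u • v₁) (-v₁) u := by
          simpa using ((hasDerivAt_id u).smul_const v₁).const_sub θ
        have hg : HasDerivAt (fun u : ℝ => ℓ (θ - u • v₁))
            (fderiv ℝ ℓ (θ - u • v₁) (-v₁)) u :=
          ((hdiff _ (hmem u hu)).hasFDerivAt).comp_hasDerivAt u hφ
        have h := hg.sub ((hasDerivAt_id' u).const_mul (c/2))
        rw [mul_one] at h
        exact h
      have hmono : MonotoneOn F (Set.Icc 0 t) := by
        apply monotoneOn_of_deriv_nonneg (convex_Icc 0 t)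
        · exact fun u hu => ((hder u hu).continuousAt).continuousWithinAt
        · intro u hu
          rw [interior_Icc] at hu
          exact ((hder u (Set.mem_Icc_of_Ioo hu)).differentiableAt).differentiableWithinAt
        · intro u hu
          rw [interior_Icc] at hu
          rw [(hder u (Set.mem_Icc_of_Ioo hu)).deriv]
          have h2 := hgrad θ hθG hθt u (Set.mem_Icc_of_Ioo hu)
          have h3 : (fderiv ℝ ℓ (θ - u • v₁)) (-v₁) = -(fderiv ℝ ℓ (θ - u • v₁)) v₁ := by
            simp
          rw [h3]; linarith
      have := hmono (Set.left_mem_Icc.2 ht.le) (Set.right_mem_Icc.2 ht.le) ht.le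
      simp only [hF, zero_smul, sub_zero, mul_zero] at this
      rw [hv]
      linarith
    -- coordinates of the shift
    have hcoordne : ∀ i, i ≠ j → (θ - v) i = θ i := by
      intro i hij
      rw [hv, hv₁]
      simp [PiLp.sub_apply, PiLp.smul_apply, EuclideanSpace.single_apply, hij]
    have hcoordj : (θ - v) j = θ j - t := by
      rw [hv, hv₁]
      simp [PiLp.sub_apply, PiLp.smul_apply, EuclideanSpace.single_apply]
    -- prior product bound
    have hprod : (∏ i, pri i (θ i)) ≤ Real.exp (Lπ * t) * ∏ i, pri i ((θ - v) i) := by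
      have hsplit1 : (∏ i, pri i (θ i)) =
          (∏ i ∈ Finset.univ \ {j}, pri i (θ i)) * pri j (θ j) :=
        Finset.prod_eq_prod_diff_singleton_mul (Finset.mem_univ j) _
      have hsplit2 : (∏ i, pri i ((θ - v) i)) =
          (∏ i ∈ Finset.univ \ {j}, pri i (θ i)) * pri j (θ j - t) := by
        rw [Finset.prod_eq_prod_diff_singleton_mul (Finset.mem_univ j)
          (fun i => pri i ((θ - v) i)), hcoordj]
        congr 1
        apply Finset.prod_congr rfl
        intro i hi
        rw [hcoordne i (by simpa using (Finset.mem_sdiff.1 hi).2)]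
      have hj : pri j (θ j) ≤ Real.exp (Lπ * t) * pri j (θ j - t) := by
        have h1 := (abs_le.1 (hpri_lip j (θ j) (θ j - t))).2
        have h2 : |θ j - (θ j - t)| = t := by
          rw [abs_of_nonneg] <;> [skip; linarith]; ring
        rw [h2] at h1
        have h4 : Real.exp (Real.log (pri j (θ j))) ≤
            Real.exp (Lπ * t + Real.log (pri j (θ j - t))) :=
          Real.exp_le_exp.2 (by linarith)
        rw [Real.exp_log (hpri_pos _ _), Real.exp_add, Real.exp_log (hpri_pos _ _)] at h4
        exact h4
      have htail : 0 ≤ ∏ i ∈ Finset.univ \ {j}, pri i (θ i) :=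
        Finset.prod_nonneg fun i _ => (hpri_pos i _).le
      calc (∏ i, pri i (θ i)) = (∏ i ∈ Finset.univ \ {j}, pri i (θ i)) * pri j (θ j) :=
            hsplit1
        _ ≤ (∏ i ∈ Finset.univ \ {j}, pri i (θ i)) * (Real.exp (Lπ * t) * pri j (θ j - t)) :=
            mul_le_mul_of_nonneg_left hj htail
        _ = Real.exp (Lπ * t) * ∏ i, pri i ((θ - v) i) := by rw [hsplit2]; ring
    -- combine
    have hKeq : K = Real.exp (Lπ * t) * Real.exp (n * (-(c / 2 * t))) := by
      rw [hK, ← Real.exp_add]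
      congr 1
      field_simp
      ring
    rw [hw θ, hw (θ - v), hKeq]
    have hexp : Real.exp (n * ℓ θ) ≤
        Real.exp (n * (-(c/2*t))) * Real.exp (n * ℓ (θ - v)) := by
      rw [← Real.exp_add]
      apply Real.exp_le_exp.2
      nlinarith [hℓle, hn]
    have hp0 : 0 ≤ (∏ i, pri i (θ i)) := Finset.prod_nonneg fun i _ => (hpri_pos i _).le
    calc (∏ i, pri i (θ i)) * Real.exp (n * ℓ θ)
        ≤ (Real.exp (Lπ * t) * ∏ i, pri i ((θ - v) i)) *
            (Real.exp (n * (-(c/2*t))) * Real.exp (n * ℓ (θ - v))) := by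
          apply mul_le_mul hprod hexp (Real.exp_pos _).le
          exact mul_nonneg (Real.exp_pos _).le
            (Finset.prod_nonneg fun i _ => (hpri_pos i _).le)
      _ = Real.exp (Lπ * t) * Real.exp (n * (-(c / 2 * t))) *
            ((∏ i, pri i ((θ - v) i)) * Real.exp (n * ℓ (θ - v))) := by ring
  -- integrability
  have hIntΘ : IntegrableOn w Θ := by
    by_contra h
    rw [hZ, integral_undef h] at hZpos
    exact lt_irrefl 0 hZpos
  have hIntG : IntegrableOn w G := hIntΘ.mono_set hGΘ
  have hIntA : IntegrableOn w A := hIntG.mono_set fun x hx => hx.1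
  -- shifted set
  have hBsub : (fun x : EuclideanSpace ℝ (Fin d) => x - v) '' A ⊆ G := by
    rintro y ⟨θ, ⟨hθG, hθt⟩, rfl⟩
    exact hshift θ hθG t ht.le hθt
  have hIntB : IntegrableOn w ((fun x : EuclideanSpace ℝ (Fin d) => x - v) '' A) :=
    hIntG.mono_set hBsub
  have hinj : Function.Injective (fun x : EuclideanSpace ℝ (Fin d) => x - v) :=
    fun a b hab => by simpa using congrArg (· + v) hab
  have hpre : (fun x : EuclideanSpace ℝ (Fin d) => x - v) ⁻¹'
      ((fun x : EuclideanSpace ℝ (Fin d) => x - v) '' A) = A :=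
    Set.preimage_image_eq A hinj
  have hmp : MeasurePreserving (fun x : EuclideanSpace ℝ (Fin d) => x - v) volume volume :=
    measurePreserving_sub_right volume v
  have hemb : MeasurableEmbedding (fun x : EuclideanSpace ℝ (Fin d) => x - v) :=
    (MeasurableEquiv.subRight v).measurableEmbedding
  have hCoV : ∫ x in A, w (x - v) =
      ∫ y in (fun x : EuclideanSpace ℝ (Fin d) => x - v) '' A, w y := by
    conv_lhs => rw [← hpre]
    exact hmp.setIntegral_preimage_emb hemb w _
  have hIntAcomp : IntegrableOn (fun x => w (x - v)) A := by
    rw [IntegrableOn, ← hpre]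
    exact ((hmp.restrict_preimage_emb hemb _).integrable_comp_emb hemb).2 hIntB
  have hBG : ∫ y in (fun x : EuclideanSpace ℝ (Fin d) => x - v) '' A, w y ≤
      ∫ y in G, w y := by
    apply setIntegral_mono_set hIntG
    · exact Filter.Eventually.of_forall fun x => (hwpos x).le
    · exact Filter.Eventually.of_forall hBsub
  -- ε-argument
  have hmain : ∀ ε > (0:ℝ), (∫ x in A, w x) ≤ (Real.exp ε * K) * ∫ x in G, w x := by
    intro ε hε
    have hae : ∀ᵐ x ∂(volume.restrict A), w x ≤ (Real.exp ε * K) * w (x - v) := by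
      set U : Set (EuclideanSpace ℝ (Fin d)) :=
        {x | ∀ᶠ y in 𝓝 x, w y ≤ (Real.exp ε * K) * w (y - v)} with hU
      have hUopen : IsOpen U := isOpen_setOf_eventually_nhds
      have hAU : A ⊆ U := by
        intro θ hθ
        have hθG := hθ.1
        have hθmv : θ - v ∈ G := hshift θ hθG t ht.le hθ.2
        have hc1 : ContinuousAt w θ := hwG_cont θ hθG
        have hsub : ContinuousAt (fun x : EuclideanSpace ℝ (Fin d) => x - v) θ :=
          (continuous_sub_right v).continuousAt
        have hc2 : ContinuousAt (fun x => w (x - v)) θ :=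
          ContinuousAt.comp (hwG_cont _ hθmv) hsub
        have hlt1 : w θ < Real.exp (ε/2) * w θ := by
          nlinarith [Real.one_lt_exp_iff.2 (by linarith : (0:ℝ) < ε/2), hwpos θ]
        have hlt2 : Real.exp (-(ε/2)) * w (θ - v) < w (θ - v) := by
          nlinarith [Real.exp_lt_one_iff.2 (by linarith : -(ε/2) < 0), hwpos (θ - v)]
        have h1 : ∀ᶠ x in 𝓝 θ, w x < Real.exp (ε/2) * w θ :=
          hc1.eventually_lt_const hlt1
        have h2 : ∀ᶠ x in 𝓝 θ, Real.exp (-(ε/2)) * w (θ - v) < w (x - v) :=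
          hc2.eventually_const_lt hlt2
        filter_upwards [h1, h2] with x hx1 hx2
        have hcb := hcore θ hθ
        have hwv : w (θ - v) ≤ Real.exp (ε/2) * w (x - v) := by
          have he : Real.exp (-(ε/2)) * Real.exp (ε/2) = 1 := by
            rw [← Real.exp_add]; simp
          nlinarith [Real.exp_pos (ε/2), Real.exp_pos (-(ε/2)), hwpos (θ - v)]
        have heps : Real.exp (ε/2) * Real.exp (ε/2) = Real.exp ε := by
          rw [← Real.exp_add]; ring_nf
        calc w x ≤ Real.exp (ε/2) * w θ := hx1.le
          _ ≤ Real.exp (ε/2) * (K * w (θ - v)) :=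
              mul_le_mul_of_nonneg_left hcb (Real.exp_pos _).le
          _ ≤ Real.exp (ε/2) * (K * (Real.exp (ε/2) * w (x - v))) := by
              apply mul_le_mul_of_nonneg_left _ (Real.exp_pos _).le
              exact mul_le_mul_of_nonneg_left hwv hKpos.le
          _ = (Real.exp ε * K) * w (x - v) := by rw [← heps]; ring
      have hUP : ∀ x ∈ U, w x ≤ (Real.exp ε * K) * w (x - v) := fun x hx =>
        Filter.Eventually.self_of_nhds
          (p := fun y => w y ≤ (Real.exp ε * K) * w (y - v)) hx
      have hUc : (volume.restrict A) Uᶜ = 0 := by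
        rw [Measure.restrict_apply hUopen.isClosed_compl.measurableSet]
        have hempty : Uᶜ ∩ A = ∅ := by
          rw [Set.eq_empty_iff_forall_notMem]
          rintro x ⟨hx1, hx2⟩
          exact hx1 (hAU hx2)
        rw [hempty, measure_empty]
      rw [ae_iff]
      exact measure_mono_null (fun x hx hxU => hx (hUP x hxU)) hUc
    calc (∫ x in A, w x) ≤ ∫ x in A, (Real.exp ε * K) * w (x - v) :=
          integral_mono_ae hIntA (hIntAcomp.const_mul _) hae
      _ = (Real.exp ε * K) * ∫ x in A, w (x - v) := integral_const_mul _ _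
      _ = (Real.exp ε * K) * ∫ y in (fun x : EuclideanSpace ℝ (Fin d) => x - v) '' A, w y := by
          rw [hCoV]
      _ ≤ (Real.exp ε * K) * ∫ y in G, w y := by
          apply mul_le_mul_of_nonneg_left hBG
          positivity
  -- take ε → 0
  have hfinal : (∫ x in A, w x) ≤ K * ∫ x in G, w x := by
    have hcont : Continuous fun ε : ℝ => (Real.exp ε * K) * ∫ x in G, w x :=
      (Real.continuous_exp.mul continuous_const).mul continuous_const
    have hT : Tendsto (fun ε : ℝ => (Real.exp ε * K) * ∫ x in G, w x)
        (𝓝[>] (0:ℝ)) (𝓝 (K * ∫ x in G, w x)) := by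
      have h0 : (Real.exp 0 * K) * ∫ x in G, w x = K * ∫ x in G, w x := by simp
      have := hcont.continuousAt (x := (0:ℝ))
      rw [ContinuousAt, h0] at this
      exact this.mono_left nhdsWithin_le_nhds
    exact ge_of_tendsto hT (eventually_mem_nhdsWithin.mono fun ε hε => hmain ε hε)
  -- divide by Z
  have hrw : K * ((∫ θ in G, w θ) / Z) = (K * ∫ θ in G, w θ) / Z := by ring
  rw [hrw]
  exact (div_le_div_iff_of_pos_right hZpos).2 hfinal
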